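/- If A is an m×n matrix with entries in {-1,0,1} such that the map x ↦ Ax is injective on binary vectors x ∈ {0,1}^n, then the (2m)×(2n+m) block matrix [[A, A, I],[A, -A, 0]] (where I is the m×m identity and 0 the m×m zero matrix) is also injective on binary vectors in {0,1}^(2n+m). -/

import Mathlib

/-- If `A` is an `m × n` matrix with entries in `{-1,0,1}` that is injective on
binary vectors, then the block matrix `[[A, A, I], [A, -A, 0]]` is also injective on binary
vectors. -/
theorem block_matrix_identification (m n : ℕ) (A : Matrix (Fin m) (Fin n) ℤ)
    (hent : ∀ i j, A i j = -1 ∨ A i j = 0 ∨ A i j = 1)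
    (hinj : ∀ x y : Fin n → ℤ, (∀ j, x j = 0 ∨ x j = 1) → (∀ j, y j = 0 ∨ y j = 1) →
      A.mulVec x = A.mulVec y → x = y) :
    ∀ x y : (Fin n ⊕ Fin n) ⊕ Fin m → ℤ,
      (∀ j, x j = 0 ∨ x j = 1) → (∀ j, y j = 0 ∨ y j = 1) →
      (Matrix.fromBlocks (Matrix.fromCols A A) (1 : Matrix (Fin m) (Fin m) ℤ)
        (Matrix.fromCols A (-A)) (0 : Matrix (Fin m) (Fin m) ℤ)).mulVec x =
      (Matrix.fromBlocks (Matrix.fromCols A A) (1 : Matrix (Fin m) (Fin m) ℤ)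
        (Matrix.fromCols A (-A)) (0 : Matrix (Fin m) (Fin m) ℤ)).mulVec y →
      x = y := by
  intro x y hx hy heq
  set x1 : Fin n → ℤ := fun j => x (Sum.inl (Sum.inl j)) with hx1
  set x2 : Fin n → ℤ := fun j => x (Sum.inl (Sum.inr j)) with hx2
  set x3 : Fin m → ℤ := fun j => x (Sum.inr j) with hx3d
  set y1 : Fin n → ℤ := fun j => y (Sum.inl (Sum.inl j)) with hy1
  set y2 : Fin n → ℤ := fun j => y (Sum.inl (Sum.inr j)) with hy2
  set y3 : Fin m → ℤ := fun j => y (Sum.inr j) with hy3d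
  have hxd : x = Sum.elim (Sum.elim x1 x2) x3 := by
    funext j; rcases j with (j | j) | j <;> rfl
  have hyd : y = Sum.elim (Sum.elim y1 y2) y3 := by
    funext j; rcases j with (j | j) | j <;> rfl
  rw [hxd, hyd, Matrix.fromBlocks_mulVec, Matrix.fromBlocks_mulVec] at heq
  simp only [Sum.elim_comp_inl, Sum.elim_comp_inr] at heq
  rw [Matrix.fromCols_mulVec_sumElim, Matrix.fromCols_mulVec_sumElim,
    Matrix.fromCols_mulVec_sumElim, Matrix.fromCols_mulVec_sumElim] at heq
  have htop : ∀ i, A.mulVec x1 i + A.mulVec x2 i + x3 i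
      = A.mulVec y1 i + A.mulVec y2 i + y3 i := by
    intro i
    have := congrFun heq (Sum.inl i)
    simpa [Matrix.one_mulVec] using this
  have hbot : ∀ i, A.mulVec x1 i - A.mulVec x2 i
      = A.mulVec y1 i - A.mulVec y2 i := by
    intro i
    have := congrFun heq (Sum.inr i)
    simp only [Sum.elim_inr, Matrix.neg_mulVec, Matrix.zero_mulVec, Pi.add_apply,
      Pi.neg_apply, Pi.zero_apply, add_zero] at this
    linarith
  have h3 : x3 = y3 := by
    funext i
    have h1 := htop i
    have h2 := hbot i
    have hxi : x3 i = 0 ∨ x3 i = 1 := hx (Sum.inr i)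
    have hyi : y3 i = 0 ∨ y3 i = 1 := hy (Sum.inr i)
    -- 2*(A x1)_i + x3 i = 2*(A y1)_i + y3 i
    have : 2 * A.mulVec x1 i + x3 i = 2 * A.mulVec y1 i + y3 i := by linarith
    omega
  have hAx1 : A.mulVec x1 = A.mulVec y1 := by
    funext i
    have h1 := htop i
    have h2 := hbot i
    have h3i := congrFun h3 i
    linarith
  have h1 : x1 = y1 := by
    refine hinj _ _ (fun j => ?_) (fun j => ?_) hAx1
    · exact hx (Sum.inl (Sum.inl j))
    · exact hy (Sum.inl (Sum.inl j))
  have hAx2 : A.mulVec x2 = A.mulVec y2 := by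
    funext i
    have h2 := hbot i
    have := congrFun hAx1 i
    linarith
  have h2 : x2 = y2 := by
    refine hinj _ _ (fun j => ?_) (fun j => ?_) hAx2
    · exact hx (Sum.inl (Sum.inr j))
    · exact hy (Sum.inl (Sum.inr j))
  rw [hxd, hyd, h1, h2, h3]
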